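/- Fix c with 1 < c < 832/825 and set τ = X^{57/275 − c}. There is a constant C > 0 (depending on c) such that for all sufficiently large X, the integral I(α) = ∫_{X/2}^{X} e(α t^c) dt satisfies ∫_{−τ}^{τ} |I(α)|² dα ≤ C · X^{2−c} · log X. -/

import Mathlib

open Real intervalIntegral Set

lemma Ibound (c : ℝ) (hc1 : 1 < c) (hc2 : c < 2) (X α : ℝ) (hX : 2 ≤ X) (hα : α ≠ 0) :
    ‖∫ t in (X / 2)..X,
        Complex.exp (2 * (Real.pi : ℂ) * Complex.I * ((α * t ^ c : ℝ) : ℂ))‖ ≤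
      X ^ (1 - c) / |α| := by
  have hX0 : (0:ℝ) < X := by linarith
  have hX2 : (0:ℝ) < X / 2 := by linarith
  have hle : X / 2 ≤ X := by linarith
  have hc0 : (0:ℝ) < c := by linarith
  have hIcc : Set.uIcc (X/2) X = Set.Icc (X/2) X := Set.uIcc_of_le hle
  have hpos : ∀ t ∈ Set.uIcc (X/2) X, 0 < t := by
    rw [hIcc]; exact fun t ht => lt_of_lt_of_le hX2 ht.1
  set K : ℂ := 2 * (Real.pi : ℂ) * Complex.I * α * c with hKdef
  have hKne : K ≠ 0 := by
    have h1 : ((α:ℝ):ℂ) ≠ 0 := Complex.ofReal_ne_zero.2 hα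
    have h2 : ((c:ℝ):ℂ) ≠ 0 := Complex.ofReal_ne_zero.2 (by linarith)
    have h3 : ((Real.pi:ℝ):ℂ) ≠ 0 := Complex.ofReal_ne_zero.2 Real.pi_ne_zero
    exact mul_ne_zero (mul_ne_zero (mul_ne_zero (mul_ne_zero two_ne_zero h3)
      Complex.I_ne_zero) h1) h2
  have hKnorm : ‖K‖ = 2 * Real.pi * |α| * c := by
    simp [hKdef, abs_of_pos Real.pi_pos,
      abs_of_pos hc0]
  set u : ℝ → ℂ := fun t => ((t ^ (1 - c) : ℝ) : ℂ) / K with hu_def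
  set u' : ℝ → ℂ := fun t => (((1 - c) * t ^ (-c) : ℝ) : ℂ) / K with hu'_def
  set v : ℝ → ℂ := fun t =>
    Complex.exp (2 * (Real.pi : ℂ) * Complex.I * ((α * t ^ c : ℝ) : ℂ)) with hv_def
  set v' : ℝ → ℂ := fun t =>
    v t * (2 * (Real.pi : ℂ) * Complex.I * ((α * (c * t ^ (c - 1)) : ℝ) : ℂ)) with hv'_def
  have hu : ∀ t ∈ Set.uIcc (X/2) X, HasDerivAt u (u' t) t := by
    intro t ht
    have ht0 : t ≠ 0 := ne_of_gt (hpos t ht)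
    have h := Real.hasDerivAt_rpow_const (x := t) (p := 1 - c) (Or.inl ht0)
    have h2 : HasDerivAt (fun s : ℝ => s ^ (1 - c)) ((1 - c) * t ^ (-c)) t := by
      convert h using 2; ring_nf
    exact (h2.ofReal_comp).div_const K
  have hv : ∀ t ∈ Set.uIcc (X/2) X, HasDerivAt v (v' t) t := by
    intro t ht
    have ht0 : t ≠ 0 := ne_of_gt (hpos t ht)
    have h := ((Real.hasDerivAt_rpow_const (x := t) (p := c) (Or.inl ht0)).const_mul α)
    have h2 : HasDerivAt (fun s : ℝ =>
        (2 * (Real.pi : ℂ) * Complex.I * ((α * s ^ c : ℝ) : ℂ)))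
        (2 * (Real.pi : ℂ) * Complex.I * ((α * (c * t ^ (c - 1)) : ℝ) : ℂ)) t := by
      exact (h.ofReal_comp).const_mul (2 * (Real.pi : ℂ) * Complex.I)
    exact h2.cexp
  have hvnorm : ∀ t : ℝ, ‖v t‖ = 1 := by
    intro t
    simp [hv_def, Complex.norm_exp]
  have hu'cont : ContinuousOn u' (Set.uIcc (X/2) X) := by
    apply ContinuousOn.div_const
    apply Complex.continuous_ofReal.comp_continuousOn
    apply ContinuousOn.mul continuousOn_const
    intro t ht
    exact (Real.continuousAt_rpow_const t (-c)
      (Or.inl (ne_of_gt (hpos t ht)))).continuousWithinAt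
  have hvcont : Continuous v := by
    apply Complex.continuous_exp.comp
    apply continuous_const.mul
    apply Complex.continuous_ofReal.comp
    exact continuous_const.mul (Real.continuous_rpow_const hc0.le)
  have hv'cont : Continuous v' := by
    apply hvcont.mul
    apply continuous_const.mul
    apply Complex.continuous_ofReal.comp
    exact continuous_const.mul
      (continuous_const.mul (Real.continuous_rpow_const (by linarith)))
  have hmul : ∀ t ∈ Set.uIcc (X/2) X, u t * v' t = v t := by
    intro t ht
    have ht0 : 0 < t := hpos t ht
    have h1 : (t:ℝ) ^ (1-c) * t ^ (c-1) = 1 := by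
      rw [← Real.rpow_add ht0]; norm_num
    have h1' : ((t ^ (1-c) : ℝ) : ℂ) * ((t ^ (c-1) : ℝ) : ℂ) = 1 := by
      rw [← Complex.ofReal_mul, h1, Complex.ofReal_one]
    rw [hu_def, hv'_def, hKdef]
    push_cast
    rw [div_mul_eq_mul_div, div_eq_iff (by rw [← hKdef]; exact hKne)]
    linear_combination v t * 2 * (Real.pi : ℂ) * Complex.I * α * c * h1'
  have hIBP := integral_mul_deriv_eq_deriv_mul hu hv
    (hu'cont.intervalIntegrable) (hv'cont.intervalIntegrable _ _)
  have key : (∫ t in (X/2)..X, v t) =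
      u X * v X - u (X/2) * v (X/2) - ∫ t in (X/2)..X, u' t * v t :=
    (integral_congr hmul).symm.trans hIBP
  -- norms of u
  have hDpos : (0:ℝ) < 2 * Real.pi * |α| * c := by
    have := Real.pi_pos
    have : (0:ℝ) < |α| := abs_pos.2 hα
    positivity
  have hunorm : ∀ t : ℝ, 0 < t → ‖u t‖ = t ^ (1-c) / (2 * Real.pi * |α| * c) := by
    intro t ht
    rw [hu_def]
    simp only [norm_div, hKnorm, Complex.norm_real, Real.norm_eq_abs]
    rw [abs_of_pos (Real.rpow_pos_of_pos ht _)]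
  -- bound for the integral of ‖u' v‖
  have hnormint : (∫ t in (X/2)..X, ‖u' t * v t‖) =
      ∫ t in (X/2)..X, ((c-1) / (2 * Real.pi * |α| * c)) * t ^ (-c) := by
    apply integral_congr
    intro t ht
    have ht0 : 0 < t := hpos t ht
    simp only [norm_mul, hvnorm, mul_one, hu'_def, norm_div, hKnorm,
      Complex.norm_real, Real.norm_eq_abs]
    rw [abs_of_pos (Real.rpow_pos_of_pos ht0 (-c)),
      abs_of_neg (show (1:ℝ) - c < 0 by linarith)]
    ring
  have hrint : (∫ t in (X/2)..X, t ^ (-c)) = (X ^ (-c+1) - (X/2) ^ (-c+1)) / (-c+1) := by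
    apply integral_rpow
    right
    constructor
    · intro h; rw [neg_eq_iff_eq_neg] at h; linarith [h]
    · rw [hIcc]; intro h; linarith [h.1]
  have hthird : ‖∫ t in (X/2)..X, u' t * v t‖ ≤
      ((X/2) ^ (1-c) - X ^ (1-c)) / (2 * Real.pi * |α| * c) := by
    calc ‖∫ t in (X/2)..X, u' t * v t‖ ≤ ∫ t in (X/2)..X, ‖u' t * v t‖ :=
          intervalIntegral.norm_integral_le_integral_norm hle
      _ = ((c-1) / (2 * Real.pi * |α| * c)) * ∫ t in (X/2)..X, t ^ (-c) := by
          rw [hnormint, intervalIntegral.integral_const_mul]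
      _ = ((X/2) ^ (1-c) - X ^ (1-c)) / (2 * Real.pi * |α| * c) := by
          rw [hrint, show (-c+1 : ℝ) = 1 - c by ring,
            show (X/2) ^ (1-c) - X ^ (1-c) = -(X ^ (1-c) - (X/2) ^ (1-c)) by ring]
          have h1c : (1:ℝ) - c ≠ 0 := by intro h; linarith
          generalize X ^ (1-c) - (X/2) ^ (1-c) = s
          field_simp
          ring
  -- final arithmetic
  rw [key]
  have e1 : ‖u X * v X - u (X/2) * v (X/2) - ∫ t in (X/2)..X, u' t * v t‖ ≤
      ‖u X‖ * ‖v X‖ + ‖u (X/2)‖ * ‖v (X/2)‖ + ‖∫ t in (X/2)..X, u' t * v t‖ := by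
    calc ‖u X * v X - u (X/2) * v (X/2) - ∫ t in (X/2)..X, u' t * v t‖
        ≤ ‖u X * v X - u (X/2) * v (X/2)‖ + ‖∫ t in (X/2)..X, u' t * v t‖ :=
          norm_sub_le _ _
      _ ≤ ‖u X * v X‖ + ‖u (X/2) * v (X/2)‖ + ‖∫ t in (X/2)..X, u' t * v t‖ := by
          have := norm_sub_le (u X * v X) (u (X/2) * v (X/2))
          linarith
      _ = ‖u X‖ * ‖v X‖ + ‖u (X/2)‖ * ‖v (X/2)‖ + ‖∫ t in (X/2)..X, u' t * v t‖ := by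
          rw [norm_mul, norm_mul]
  refine le_trans e1 ?_
  rw [hvnorm, hvnorm, mul_one, mul_one, hunorm X hX0, hunorm (X/2) hX2]
  set A := X ^ (1-c) with hA
  set B := (X/2) ^ (1-c) with hB
  have hA0 : 0 < A := Real.rpow_pos_of_pos hX0 _
  have hB0 : 0 < B := Real.rpow_pos_of_pos hX2 _
  have h2' : (2:ℝ) ^ (c-1) * 2 ^ (1-c) = 1 := by
    rw [← Real.rpow_add (by norm_num : (0:ℝ) < 2)]
    norm_num
  have hBA : B = A * 2 ^ (c-1) := by
    rw [hA, hB, Real.div_rpow hX0.le (by norm_num),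
      div_eq_iff (ne_of_gt (Real.rpow_pos_of_pos two_pos (1-c))), mul_assoc, h2', mul_one]
  have h2c : (2:ℝ) ^ (c-1) ≤ 2 := by
    calc (2:ℝ) ^ (c-1) ≤ 2 ^ (1:ℝ) :=
          Real.rpow_le_rpow_of_exponent_le one_le_two (by linarith)
      _ = 2 := Real.rpow_one 2
  have hπ : 3 < Real.pi := Real.pi_gt_three
  have habs : 0 < |α| := abs_pos.2 hα
  refine le_trans (show _ ≤ A / (2 * Real.pi * |α| * c) + B / (2 * Real.pi * |α| * c)
    + (B - A) / (2 * Real.pi * |α| * c) by linarith [hthird]) ?_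
  rw [← add_div, ← add_div, show A + B + (B - A) = 2 * B by ring,
    div_le_div_iff₀ hDpos habs]
  have hBA2 : B ≤ 2 * A := by rw [hBA]; nlinarith [h2c, hA0]
  have hπc : (2:ℝ) ≤ Real.pi * c := by nlinarith [hπ, hc1]
  nlinarith [mul_le_mul_of_nonneg_right hBA2 habs.le,
    mul_le_mul_of_nonneg_left hπc (mul_pos hA0 habs).le]

lemma normexp (r : ℝ) : ‖Complex.exp (2 * (Real.pi : ℂ) * Complex.I * (r : ℂ))‖ = 1 := by
  simp [Complex.norm_exp]

lemma Itriv (c X : ℝ) (hX0 : 0 ≤ X) (α : ℝ) :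
    ‖∫ t in (X / 2)..X,
        Complex.exp (2 * (Real.pi : ℂ) * Complex.I * ((α * t ^ c : ℝ) : ℂ))‖ ≤ X / 2 := by
  have h := intervalIntegral.norm_integral_le_of_norm_le_const
    (C := 1) (a := X/2) (b := X)
    (f := fun t => Complex.exp (2 * (Real.pi : ℂ) * Complex.I * ((α * t ^ c : ℝ) : ℂ)))
    (fun t _ => le_of_eq (normexp _))
  calc ‖_‖ ≤ 1 * |X - X/2| := h
    _ = X / 2 := by rw [one_mul, abs_of_nonneg (by linarith)]; ring

lemma Icont (c : ℝ) (hc : 0 < c) (X : ℝ) :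
    Continuous fun α : ℝ => ∫ t in (X / 2)..X,
      Complex.exp (2 * (Real.pi : ℂ) * Complex.I * ((α * t ^ c : ℝ) : ℂ)) := by
  apply intervalIntegral.continuous_parametric_intervalIntegral_of_continuous'
  exact Complex.continuous_exp.comp (continuous_const.mul
    (Complex.continuous_ofReal.comp ((continuous_fst.mul
      ((Real.continuous_rpow_const hc.le).comp continuous_snd)))))

theorem I_square_integral_near_zero (c : ℝ) (hc1 : 1 < c) (hc2 : c < 832 / 825) :
    ∃ C : ℝ, 0 < C ∧ ∃ X₀ : ℝ, ∀ X : ℝ, X₀ ≤ X →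
      (∫ α in (-(X ^ (57 / 275 - c)))..(X ^ (57 / 275 - c)),
          ‖∫ t in (X / 2)..X,
              Complex.exp (2 * (Real.pi : ℂ) * Complex.I * ((α * t ^ c : ℝ) : ℂ))‖ ^ 2) ≤
        C * X ^ (2 - c) * Real.log X := by
  refine ⟨3, by norm_num, 3, fun X hX => ?_⟩
  have hc2' : c < 2 := by norm_num at hc2 ⊢; linarith
  have hX0 : (0:ℝ) < X := by linarith
  have hX1 : (1:ℝ) ≤ X := by linarith
  have hX2 : (2:ℝ) ≤ X := by linarith
  set τ : ℝ := X ^ (57 / 275 - c) with hτ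
  set δ : ℝ := X ^ (-c) with hδ
  have hτ0 : 0 < τ := Real.rpow_pos_of_pos hX0 _
  have hδ0 : 0 < δ := Real.rpow_pos_of_pos hX0 _
  have hδτ : δ ≤ τ := Real.rpow_le_rpow_of_exponent_le hX1 (by norm_num)
  set J : ℝ → ℝ := fun α => ‖∫ t in (X / 2)..X,
      Complex.exp (2 * (Real.pi : ℂ) * Complex.I * ((α * t ^ c : ℝ) : ℂ))‖ ^ 2 with hJ
  have hJcont : Continuous J := ((Icont c (by linarith) X).norm).pow 2
  have hint : ∀ a b : ℝ, IntervalIntegrable J MeasureTheory.volume a b :=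
    fun a b => hJcont.intervalIntegrable a b
  have hJnonneg : ∀ α, 0 ≤ J α := fun α => by positivity
  -- splitting
  have hsplit : (∫ α in (-τ)..τ, J α) =
      (∫ α in (-τ)..(-δ), J α) + (∫ α in (-δ)..δ, J α) + ∫ α in δ..τ, J α := by
    have h1 := intervalIntegral.integral_add_adjacent_intervals (hint (-δ) δ) (hint δ τ)
    have h2 := intervalIntegral.integral_add_adjacent_intervals (hint (-τ) (-δ)) (hint (-δ) τ)
    rw [← h2, ← h1]
    ring
  -- pointwise square bounds
  have hsq : ∀ α : ℝ, α ≠ 0 → J α ≤ (X ^ (1-c)) ^ 2 * (α:ℝ) ^ (-2 : ℤ) := by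
    intro α hα
    have h1 : J α ≤ (X ^ (1-c) / |α|) ^ 2 := by
      apply pow_le_pow_left₀ (norm_nonneg _)
      exact Ibound c hc1 hc2' X α hX2 hα
    refine h1.trans (le_of_eq ?_)
    rw [div_pow, sq_abs]
    rw [zpow_neg, ← zpow_natCast α 2]
    norm_num
    rfl
  -- middle piece
  have hmid : (∫ α in (-δ)..δ, J α) ≤ δ * X ^ (2:ℝ) / 2 := by
    have h := intervalIntegral.integral_mono_on (by linarith : -δ ≤ δ) (hint (-δ) δ)
      (_root_.intervalIntegrable_const (c := (X/2)^2))
      (fun α _ => by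
        apply pow_le_pow_left₀ (norm_nonneg _)
        exact Itriv c X hX0.le α)
    refine h.trans ?_
    rw [intervalIntegral.integral_const, smul_eq_mul]
    rw [show X ^ (2:ℝ) = X ^ (2:ℕ) from Real.rpow_natCast X 2]
    ring_nf
    nlinarith [hδ0, sq_nonneg X]
  -- zpow integral values
  have hzint : ∀ a b : ℝ, 0 ∉ Set.uIcc a b →
      (∫ α in a..b, (α:ℝ) ^ (-2:ℤ)) = -(b⁻¹) + a⁻¹ := by
    intro a b h0
    rw [integral_zpow (Or.inr ⟨by norm_num, h0⟩)]
    norm_num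
    ring
  have hzint_cont : ∀ a b : ℝ, 0 ∉ Set.uIcc a b →
      IntervalIntegrable (fun α : ℝ => (X ^ (1-c)) ^ 2 * (α:ℝ) ^ (-2:ℤ))
        MeasureTheory.volume a b := by
    intro a b h0
    apply ContinuousOn.intervalIntegrable
    apply continuousOn_const.mul
    intro x hx
    exact (continuousAt_zpow₀ _ _ (Or.inl (fun h => h0 (h ▸ hx)))).continuousWithinAt
  -- right piece
  have h0r : (0:ℝ) ∉ Set.uIcc δ τ := by
    rw [Set.uIcc_of_le hδτ]; intro h; exact absurd h.1 (by linarith)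
  have hright : (∫ α in δ..τ, J α) ≤ (X ^ (1-c)) ^ 2 * δ⁻¹ := by
    have h := intervalIntegral.integral_mono_on hδτ (hint δ τ) (hzint_cont δ τ h0r)
      (fun α hα => hsq α (by rintro rfl; exact h0r (by rw [Set.uIcc_of_le hδτ]; exact hα)))
    refine h.trans ?_
    rw [intervalIntegral.integral_const_mul, hzint δ τ h0r]
    have : -(τ⁻¹) + δ⁻¹ ≤ δ⁻¹ := by
      have := inv_pos.2 hτ0; linarith
    nlinarith [sq_nonneg (X ^ (1-c))]
  -- left piece
  have h0l : (0:ℝ) ∉ Set.uIcc (-τ) (-δ) := by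
    rw [Set.uIcc_of_le (by linarith : -τ ≤ -δ)]; intro h; exact absurd h.2 (by linarith)
  have hleft : (∫ α in (-τ)..(-δ), J α) ≤ (X ^ (1-c)) ^ 2 * δ⁻¹ := by
    have h := intervalIntegral.integral_mono_on (by linarith : -τ ≤ -δ)
      (hint (-τ) (-δ)) (hzint_cont _ _ h0l)
      (fun α hα => hsq α (by rintro rfl; exact h0l (by
        rw [Set.uIcc_of_le (by linarith : -τ ≤ -δ)]; exact hα)))
    refine h.trans ?_
    rw [intervalIntegral.integral_const_mul, hzint _ _ h0l]
    have h2 : -((-δ:ℝ)⁻¹) + (-τ)⁻¹ ≤ δ⁻¹ := by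
      rw [inv_neg, inv_neg]
      have := inv_pos.2 hτ0; linarith
    nlinarith [sq_nonneg (X ^ (1-c))]
  -- rpow arithmetic
  have hXsq : (X ^ (1-c)) ^ 2 * δ⁻¹ = X ^ (2 - c) := by
    rw [hδ, ← Real.rpow_neg_one (X ^ (-c)), ← Real.rpow_mul hX0.le,
      ← Real.rpow_natCast (X ^ (1-c)) 2, ← Real.rpow_mul hX0.le, ← Real.rpow_add hX0]
    congr 1
    ring
  have hmid2 : δ * X ^ (2:ℝ) / 2 = X ^ (2-c) / 2 := by
    rw [hδ, ← Real.rpow_add hX0]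
    congr 2
    ring
  have hlog : 1 ≤ Real.log X := by
    rw [Real.le_log_iff_exp_le hX0]
    calc Real.exp 1 ≤ 2.7182818286 := Real.exp_one_lt_d9.le
      _ ≤ X := by norm_num at hX ⊢; linarith
  have hpow0 : 0 ≤ X ^ (2-c) := (Real.rpow_pos_of_pos hX0 _).le
  calc (∫ α in (-τ)..τ, J α) ≤ X ^ (2-c) + X ^ (2-c) / 2 + X ^ (2-c) := by
        rw [hsplit]
        rw [hXsq] at hright hleft
        rw [hmid2] at hmid
        linarith
    _ ≤ 3 * X ^ (2-c) * Real.log X := by nlinarith [hpow0, hlog]
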